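/- arXiv:2603.03867 — 5 statements merged into one kernel-verified Lean document; each statement's English description precedes it below -/
import Mathlib

section
/- For the sensitive star graph with one blue center and n peripheral nodes of which a fraction p are blue, the assortativity with respect to the sensitive attribute equals a = −(1−p)/(p+1). -/
open Finset
open scoped Classical

/-- Vertices of the sensitive star graph: `none` is the blue center,
`some i` the peripheral nodes. -/
abbrev Vstar (n : ℕ) := Option (Fin n)

/-- The star graph: the center is adjacent to every peripheral node. -/
def Gstar (n : ℕ) : SimpleGraph (Vstar n) :=
  SimpleGraph.fromRel (fun x _ => x = none)

/-- Colors: the center is blue (`false`); peripheral node `i` is blue iff `i < m`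
(so `m` peripheral nodes are blue and `n − m` are red (`true`)). -/
def Sstar (n m : ℕ) : Vstar n → Bool
  | none => false
  | some i => decide (m ≤ i.val)

/-- Mixing matrix of a colored graph: `(mixM G S) s s'` is the fraction of (ordered)
adjacent pairs whose endpoints have colors `(s, s')`.  Its diagonal entry `s s` is the
fraction of edges joining group `s` to itself, and each off-diagonal entry is half the
fraction of inter-group edges. -/
noncomputable def mixM {V : Type*} [Fintype V] (G : SimpleGraph V) (S : V → Bool) :
    Matrix Bool Bool ℝ :=
  Matrix.of fun s s' =>
    ((Finset.univ.filter
        (fun p : V × V => G.Adj p.1 p.2 ∧ S p.1 = s ∧ S p.2 = s')).card : ℝ) /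
      ((Finset.univ.filter (fun p : V × V => G.Adj p.1 p.2)).card : ℝ)

/-- Sum of all entries of `e²`. -/
noncomputable def sumSq (e : Matrix Bool Bool ℝ) : ℝ := ∑ i, ∑ j, (e * e) i j

/-- Assortativity with respect to the sensitive attribute:
`a = (Tr(e) − Σe²)/(1 − Σe²)`. -/
noncomputable def assort {V : Type*} [Fintype V] (G : SimpleGraph V) (S : V → Bool) : ℝ :=
  ((mixM G S).trace - sumSq (mixM G S)) / (1 - sumSq (mixM G S))

lemma gstar_adj {n : ℕ} {x y : Vstar n} :
    (Gstar n).Adj x y ↔ x ≠ y ∧ (x = none ∨ y = none) := by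
  simp [Gstar, SimpleGraph.fromRel_adj]

lemma key (n : ℕ) (P Q : Vstar n → Prop) :
    (univ.filter fun p : Vstar n × Vstar n =>
        (Gstar n).Adj p.1 p.2 ∧ P p.1 ∧ Q p.2).card
      = (if P none then (univ.filter fun i : Fin n => Q (some i)).card else 0)
      + (if Q none then (univ.filter fun i : Fin n => P (some i)).card else 0) := by
  have hinj1 : Function.Injective (fun i : Fin n => ((none : Vstar n), (some i : Vstar n))) := by
    intro a b h; simpa using h
  have hinj2 : Function.Injective (fun i : Fin n => ((some i : Vstar n), (none : Vstar n))) := by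
    intro a b h; simpa using h
  have hset : (univ.filter fun p : Vstar n × Vstar n =>
        (Gstar n).Adj p.1 p.2 ∧ P p.1 ∧ Q p.2)
      = ((if P none then (univ.filter fun i : Fin n => Q (some i)) else ∅).image
            (fun i => ((none : Vstar n), (some i : Vstar n))))
        ∪ ((if Q none then (univ.filter fun i : Fin n => P (some i)) else ∅).image
            (fun i => ((some i : Vstar n), (none : Vstar n)))) := by
    by_cases hP : P none <;> by_cases hQ : Q none <;>
    · ext ⟨x, y⟩
      rcases x with _ | i <;> rcases y with _ | j <;>
        simp [gstar_adj, hP, hQ]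
  rw [hset, card_union_of_disjoint, card_image_of_injective _ hinj1,
      card_image_of_injective _ hinj2]
  · by_cases hP : P none <;> by_cases hQ : Q none <;> simp [hP, hQ]
  · rw [Finset.disjoint_left]
    rintro ⟨x, y⟩ h1 h2
    simp only [Finset.mem_image] at h1 h2
    obtain ⟨i, _, hi⟩ := h1
    obtain ⟨j, _, hj⟩ := h2
    rw [← hj] at hi
    simpa using congrArg Prod.fst hi

lemma count_adj (n : ℕ)
    {inst : DecidablePred fun p : Vstar n × Vstar n => (Gstar n).Adj p.1 p.2} :
    (@Finset.filter _ (fun p : Vstar n × Vstar n => (Gstar n).Adj p.1 p.2) inst univ).card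
      = 2 * n := by
  rw [Finset.filter_congr_decidable]
  have : (univ.filter fun p : Vstar n × Vstar n => (Gstar n).Adj p.1 p.2)
      = univ.filter fun p : Vstar n × Vstar n =>
          (Gstar n).Adj p.1 p.2 ∧ (fun _ : Vstar n => True) p.1 ∧ (fun _ : Vstar n => True) p.2 := by
    simp
  rw [this]
  have h := key n (fun _ : Vstar n => True) (fun _ : Vstar n => True)
  rw [Finset.filter_congr_decidable] at h ⊢
  refine h.trans ?_
  simp [two_mul]

lemma card_false (n m : ℕ) (hmn : m < n)
    {inst : DecidablePred fun i : Fin n => Sstar n m (some i) = false} :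
    (@Finset.filter _ (fun i : Fin n => Sstar n m (some i) = false) inst univ).card = m := by
  rw [Finset.filter_congr_decidable]
  have : (univ.filter fun i : Fin n => Sstar n m (some i) = false) = Iio ⟨m, hmn⟩ := by
    ext i; simp [Sstar, Fin.lt_def]
  rw [this, Fin.card_Iio]

lemma card_true (n m : ℕ) (hmn : m < n)
    {inst : DecidablePred fun i : Fin n => Sstar n m (some i) = true} :
    (@Finset.filter _ (fun i : Fin n => Sstar n m (some i) = true) inst univ).card = n - m := by
  rw [Finset.filter_congr_decidable]
  have : (univ.filter fun i : Fin n => Sstar n m (some i) = true) = Ici ⟨m, hmn⟩ := by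
    ext i; simp [Sstar, Fin.le_def]
  rw [this, Fin.card_Ici]

lemma count_col (n m : ℕ) (hmn : m < n) (s s' : Bool)
    {inst : DecidablePred fun p : Vstar n × Vstar n =>
        (Gstar n).Adj p.1 p.2 ∧ Sstar n m p.1 = s ∧ Sstar n m p.2 = s'} :
    (@Finset.filter _ (fun p : Vstar n × Vstar n =>
        (Gstar n).Adj p.1 p.2 ∧ Sstar n m p.1 = s ∧ Sstar n m p.2 = s') inst univ).card
      = (if s = false then (if s' = false then m else n - m) else 0)
      + (if s' = false then (if s = false then m else n - m) else 0) := by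
  rw [Finset.filter_congr_decidable]
  have h := key n (fun v => Sstar n m v = s) (fun v => Sstar n m v = s')
  rw [Finset.filter_congr_decidable] at h ⊢
  refine h.trans ?_
  have h0 : Sstar n m none = false := rfl
  rcases s <;> rcases s' <;>
    simp [h0, card_false n m hmn, card_true n m hmn]

lemma mix_entry (n m : ℕ) (hmn : m < n) (s s' : Bool) :
    mixM (Gstar n) (Sstar n m) s s'
      = (((if s = false then (if s' = false then m else n - m) else 0)
          + (if s' = false then (if s = false then m else n - m) else 0) : ℕ) : ℝ)
        / ((2 * n : ℕ) : ℝ) := by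
  simp only [mixM, Matrix.of_apply]
  rw [count_adj n, count_col n m hmn s s']

/-- for the sensitive star graph with one blue center and `n` peripheral
nodes of which `m = np` are blue (`p = m/n`), the assortativity with respect to the
sensitive attribute equals `a = −(1 − p)/(p + 1)`. -/
theorem stmt3 (n m : ℕ) (hm : 0 < m) (hmn : m < n) :
    assort (Gstar n) (Sstar n m) =
      -((1 - (m : ℝ) / n) / ((m : ℝ) / n + 1)) := by
  have hn : (0:ℝ) < n := by exact_mod_cast hm.trans hmn
  have hA : (0:ℝ) < m := by exact_mod_cast hm
  have hAN : (m:ℝ) < n := by exact_mod_cast hmn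
  set A : ℝ := (m:ℝ)
  set N : ℝ := (n:ℝ)
  have hNne : N ≠ 0 := ne_of_gt hn
  have hff : mixM (Gstar n) (Sstar n m) false false = A / N := by
    rw [mix_entry n m hmn]
    push_cast
    simp only [↓reduceIte]
    rw [show ((n:ℕ):ℝ) = N from rfl]
    field_simp
    ring
  have hft : mixM (Gstar n) (Sstar n m) false true = (N - A) / (2 * N) := by
    rw [mix_entry n m hmn]
    push_cast [hmn.le]
    norm_num
    try ring
  have htf : mixM (Gstar n) (Sstar n m) true false = (N - A) / (2 * N) := by
    rw [mix_entry n m hmn]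
    push_cast [hmn.le]
    norm_num
    try ring
  have htt : mixM (Gstar n) (Sstar n m) true true = 0 := by
    rw [mix_entry n m hmn]
    norm_num
  have htr : (mixM (Gstar n) (Sstar n m)).trace = A / N := by
    simp [Matrix.trace, Matrix.diag, Fintype.sum_bool, hff, htt]
  have hsq : sumSq (mixM (Gstar n) (Sstar n m))
      = (N^2 + A^2) / (2 * N^2) := by
    simp only [sumSq, Matrix.mul_apply, Fintype.sum_bool, hff, hft, htf, htt]
    field_simp
    ring
  rw [assort, htr, hsq]
  have h1 : 1 - (N^2 + A^2) / (2 * N^2) = (N - A) * (N + A) / (2 * N^2) := by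
    field_simp
    ring
  have h1ne : 1 - (N^2 + A^2) / (2 * N^2) ≠ 0 := by
    rw [h1]
    have hpos : 0 < (N - A) * (N + A) / (2 * N^2) := by
      apply div_pos
      · nlinarith
      · positivity
    exact ne_of_gt hpos
  have h2ne : A / N + 1 ≠ 0 := by positivity
  rw [← neg_div, div_eq_div_iff h1ne h2ne]
  field_simp
  ring
end

section
/- For toy graph (b) — blue bridge node b adjacent to red bridge node r, with n blue leaves on b each of which additionally carries one red pendant node, and symmetrically n red leaves on r each carrying one blue pendant node — the 1-hop structural bias equals NB^(1) = (n²+1)/((n+1)(2n+1)). -/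
open Finset
open scoped Classical

/-- The set of nodes at shortest-path distance exactly `k` from `v`. -/
noncomputable def Nk {V : Type*} [Fintype V] (G : SimpleGraph V) (k : ℕ) (v : V) : Finset V :=
  Finset.univ.filter (fun w => G.dist v w = k)

/-- Nodes of sensitive group `s` having a nonempty `k`-hop neighborhood. -/
noncomputable def Vk {V : Type*} [Fintype V] (G : SimpleGraph V) (S : V → Bool) (k : ℕ)
    (s : Bool) : Finset V :=
  Finset.univ.filter (fun v => S v = s ∧ (Nk G k v).Nonempty)

/-- `k`-hop group exposure: average over group-`s` nodes (with nonempty `k`-hop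
neighborhood) of the fraction of their `k`-hop neighbors in group `s'`. -/
noncomputable def phi {V : Type*} [Fintype V] (G : SimpleGraph V) (S : V → Bool) (k : ℕ)
    (s s' : Bool) : ℝ :=
  (∑ v ∈ Vk G S k s,
      (((Nk G k v).filter (fun w => S w = s')).card : ℝ) / ((Nk G k v).card : ℝ)) /
    ((Vk G S k s).card : ℝ)

/-- Binary-attribute `k`-hop structural bias `NB^(k) = |φ_{0→0} + φ_{1→1} − 1|`. -/
noncomputable def NB {V : Type*} [Fintype V] (G : SimpleGraph V) (S : V → Bool) (k : ℕ) : ℝ :=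
  |phi G S k false false + phi G S k true true - 1|

/-- Vertices of toy graph (b): `Sum.inl x` is the bridge node of color `x`
(`false` = blue, `true` = red); `Sum.inr (o, i, false)` is the `i`-th level-1 leaf on
the side of the bridge of color `o` (it has color `o`); `Sum.inr (o, i, true)` is the
pendant node attached to that leaf (it has the opposite color `!o`). -/
abbrev Vb (n : ℕ) := Bool ⊕ (Bool × Fin n × Bool)

def relB (n : ℕ) : Vb n → Vb n → Prop
  | Sum.inl _, Sum.inl _ => True
  | Sum.inl x, Sum.inr p => x = p.1 ∧ p.2.2 = false
  | Sum.inr p, Sum.inr q => p.1 = q.1 ∧ p.2.1 = q.2.1 ∧ p.2.2 = false ∧ q.2.2 = true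
  | _, _ => False

/-- Toy graph (b). -/
def Gb (n : ℕ) : SimpleGraph (Vb n) := SimpleGraph.fromRel (relB n)

/-- Colors in toy graph (b). -/
def Sb (n : ℕ) : Vb n → Bool
  | Sum.inl x => x
  | Sum.inr p => if p.2.2 then !p.1 else p.1

section Aux
variable (n : ℕ)

lemma Nk_one {V : Type*} [Fintype V] (G : SimpleGraph V) (v : V) :
    Nk G 1 v = G.neighborFinset v := by
  ext w
  simp [Nk, SimpleGraph.dist_eq_one_iff_adj]

lemma adjb (u v : Vb n) :
    (Gb n).Adj u v ↔ u ≠ v ∧ (relB n u v ∨ relB n v u) := SimpleGraph.fromRel_adj _ u v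

lemma N_inl (x : Bool) : (Gb n).neighborFinset (Sum.inl x) =
    insert (Sum.inl (!x)) ((univ : Finset (Fin n)).image fun i => Sum.inr (x, i, false)) := by
  ext w
  rcases w with y | ⟨o, i, t⟩
  · cases x <;> cases y <;> simp_all [adjb, relB]
  · cases t <;> cases x <;> cases o <;> simp_all [adjb, relB] <;> tauto

lemma N_leaf (o : Bool) (i : Fin n) : (Gb n).neighborFinset (Sum.inr (o, i, false)) =
    {Sum.inl o, Sum.inr (o, i, true)} := by
  ext w
  rcases w with y | ⟨o', i', t⟩ <;>
    simp_all [adjb, relB] <;> constructor <;> rintro h <;>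
    first
      | (obtain ⟨h1, h2 | h2⟩ := h <;> simp_all <;> tauto)
      | (simp_all <;> tauto)

lemma N_pend (o : Bool) (i : Fin n) : (Gb n).neighborFinset (Sum.inr (o, i, true)) =
    {Sum.inr (o, i, false)} := by
  ext w
  rcases w with y | ⟨o', i', t⟩ <;>
    simp_all [adjb, relB] <;> constructor <;> rintro h <;>
    first
      | (obtain ⟨h1, h2 | h2⟩ := h <;> simp_all <;> tauto)
      | (simp_all <;> tauto)

end Aux
section Main
variable (n : ℕ)

/-- fraction of neighbors of `v` having color `s'`. -/
noncomputable def tm (s' : Bool) (v : Vb n) : ℝ :=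
  ((((Gb n).neighborFinset v).filter (fun w => Sb n w = s')).card : ℝ) /
    (((Gb n).neighborFinset v).card : ℝ)

lemma nonempty_nbhd (v : Vb n) : ((Gb n).neighborFinset v).Nonempty := by
  rcases v with y | ⟨o, i, t⟩
  · exact ⟨Sum.inl (!y), by rw [N_inl]; simp⟩
  · cases t
    · exact ⟨Sum.inl o, by rw [N_leaf]; simp⟩
    · exact ⟨Sum.inr (o, i, false), by rw [N_pend]; simp⟩

lemma tm_inl (x : Bool) : tm n x (Sum.inl x) = (n : ℝ) / (n + 1) := by
  unfold tm
  rw [N_inl, Finset.filter_insert, if_neg (by simp [Sb]),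
    Finset.filter_true_of_mem (by rintro w hw; simp at hw; obtain ⟨i, rfl⟩ := hw; simp [Sb]),
    Finset.card_insert_of_notMem (by simp),
    Finset.card_image_of_injective _ (fun a b h => by simpa using h)]
  simp

lemma tm_leaf (o : Bool) (i : Fin n) : tm n o (Sum.inr (o, i, false)) = 1 / 2 := by
  unfold tm
  rw [N_leaf]
  rw [show ({Sum.inl o, Sum.inr (o, i, true)} : Finset (Vb n)).filter (fun w => Sb n w = o)
      = {Sum.inl o} from by
    ext w
    simp only [Finset.mem_filter, Finset.mem_insert, Finset.mem_singleton]
    constructor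
    · rintro ⟨rfl | rfl, h⟩
      · rfl
      · simp [Sb] at h
    · rintro rfl; exact ⟨Or.inl rfl, by simp [Sb]⟩]
  simp

lemma tm_pend (o x : Bool) (h : x ≠ o) (i : Fin n) : tm n x (Sum.inr (o, i, true)) = 0 := by
  unfold tm
  rw [N_pend]
  rw [show ({Sum.inr (o, i, false)} : Finset (Vb n)).filter (fun w => Sb n w = x)
      = ∅ from by
    ext w
    simp only [Finset.mem_filter, Finset.mem_singleton, Finset.notMem_empty, iff_false,
      not_and]
    rintro rfl
    simp [Sb, h.symm]]
  simp

lemma phi_xx (x : Bool) :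
    phi (Gb n) (Sb n) 1 x x = ((n : ℝ) / (n + 1) + n / 2) / (2 * n + 1) := by
  have hVk : Vk (Gb n) (Sb n) 1 x = univ.filter (fun v => Sb n v = x) := by
    unfold Vk
    apply Finset.filter_congr
    intro v _
    simp [Nk_one, nonempty_nbhd n v]
  have hcard : (univ.filter (fun v : Vb n => Sb n v = x)).card = 2 * n + 1 := by
    rw [Finset.card_filter, Fintype.sum_sum_type]
    simp only [Fintype.sum_prod_type, Fintype.sum_bool]
    cases x <;> simp [Sb, Finset.sum_const, Finset.card_univ] <;> ring
  have hsum : ∀ v : Vb n, (((Nk (Gb n) 1 v).filter (fun w => Sb n w = x)).card : ℝ)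
      / ((Nk (Gb n) 1 v).card : ℝ) = tm n x v := by
    intro v; rw [Nk_one]; rfl
  unfold phi
  rw [hVk, hcard]
  simp only [hsum]
  rw [Finset.sum_filter, Fintype.sum_sum_type]
  simp only [Fintype.sum_prod_type, Fintype.sum_bool]
  cases x <;>
    · simp only [Sb, if_true, if_false, Bool.not_false, Bool.not_true, ite_true, ite_false,
        show (true = false) = False from by simp, show (false = true) = False from by simp,
        show (false = false) = True from by simp, show (true = true) = True from by simp]
      rw [tm_inl]
      simp only [tm_leaf, tm_pend n true false (by simp), tm_pend n false true (by simp), Finset.sum_const, Finset.card_univ,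
        Fintype.card_fin, nsmul_eq_mul, mul_zero, mul_one]
      push_cast
      ring_nf
end Main

/-- for toy graph (b) — blue bridge adjacent to red bridge, `n` blue
leaves on the blue bridge each carrying one red pendant, and symmetrically on the
red side — the 1-hop structural bias equals `NB^(1) = (n² + 1)/((n+1)(2n+1))`. -/
theorem stmt7 (n : ℕ) (hn : 0 < n) :
    NB (Gb n) (Sb n) 1 =
      ((n : ℝ) ^ 2 + 1) / (((n : ℝ) + 1) * (2 * (n : ℝ) + 1)) := by
  have h1 : (n:ℝ) + 1 ≠ 0 := by positivity
  have h2 : 2*(n:ℝ) + 1 ≠ 0 := by positivity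
  unfold NB
  rw [phi_xx, phi_xx]
  have key : ((n:ℝ)/(n+1) + n/2)/(2*n+1) + ((n:ℝ)/(n+1) + n/2)/(2*n+1) - 1
      = -(((n:ℝ)^2+1) / (((n:ℝ)+1)*(2*(n:ℝ)+1))) := by
    field_simp
    ring
  rw [key, abs_neg, abs_of_nonneg (by positivity)]
end

section
/- For toy graph (b), the 2-hop structural bias equals NB^(2) = 3/(2n+1) and the 3-hop structural bias equals NB^(3) = (2n−3)/(2n+1). In particular NB^(3) → 1 as n → ∞. -/
open Finset
open scoped Classical

namespace Toy
open SimpleGraph Sum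

variable {n : ℕ}

lemma adj_ll {x y : Bool} : (Gb n).Adj (inl x) (inl y) ↔ x ≠ y := by
  simp [Gb, SimpleGraph.fromRel_adj, relB]

lemma adj_lr {x o : Bool} {i : Fin n} {c : Bool} :
    (Gb n).Adj (inl x) (inr (o, i, c)) ↔ x = o ∧ c = false := by
  simp [Gb, SimpleGraph.fromRel_adj, relB]

lemma adj_rr {o o' : Bool} {i i' : Fin n} {c c' : Bool} :
    (Gb n).Adj (inr (o, i, c)) (inr (o', i', c')) ↔
      o = o' ∧ i = i' ∧ ((c = false ∧ c' = true) ∨ (c = true ∧ c' = false)) := by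
  constructor
  · rintro ⟨hne, h | h⟩
    · obtain ⟨h1, h2, h3, h4⟩ := h
      exact ⟨h1, h2, Or.inl ⟨h3, h4⟩⟩
    · obtain ⟨h1, h2, h3, h4⟩ := h
      exact ⟨h1.symm, h2.symm, Or.inr ⟨h4, h3⟩⟩
  · rintro ⟨rfl, rfl, h | h⟩ <;> obtain ⟨rfl, rfl⟩ := h
    · exact ⟨by simp, Or.inl ⟨rfl, rfl, rfl, rfl⟩⟩
    · exact ⟨by simp, Or.inr ⟨rfl, rfl, rfl, rfl⟩⟩

def lv (c : Bool) : ℕ := if c then 2 else 1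

def d (n : ℕ) : Vb n → Vb n → ℕ
  | inl x, inl y => if x = y then 0 else 1
  | inl x, inr (o, _, c) => lv c + (if x = o then 0 else 1)
  | inr (o, _, c), inl y => lv c + (if y = o then 0 else 1)
  | inr (o, i, c), inr (o', i', c') =>
      if o = o' then (if i = i' then (if c = c' then 0 else 1) else lv c + lv c')
      else lv c + lv c' + 1

lemma d_self (a : Vb n) : d n a a = 0 := by
  obtain (x | ⟨o, i, c⟩) := a <;> simp [d]

lemma gb_conn : (Gb n).Connected := by
  rw [SimpleGraph.connected_iff]
  refine ⟨fun a b => ?_, ⟨inl false⟩⟩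
  have key : ∀ a : Vb n, (Gb n).Reachable a (inl false) := by
    have hb : ∀ o : Bool, (Gb n).Reachable (inl o) (inl false) := by
      intro o; cases o
      · exact Reachable.refl _
      · exact (adj_ll.mpr (by simp)).reachable
    rintro (x | ⟨o, i, c⟩)
    · exact hb x
    · have h1 : (Gb n).Reachable (inr (o, i, false)) (inl false) :=
        ((adj_lr.mpr ⟨rfl, rfl⟩).symm.reachable).trans (hb o)
      cases c
      · exact h1
      · exact ((adj_rr.mpr ⟨rfl, rfl, Or.inr ⟨rfl, rfl⟩⟩).reachable).trans h1
  exact (key a).trans (key b).symm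

lemma adj_dist_le {u v : Vb n} (h : (Gb n).Adj u v) : (Gb n).dist u v ≤ 1 :=
  le_of_eq (SimpleGraph.dist_eq_one_iff_adj.mpr h)

lemma dist_lr_le (x o : Bool) (i : Fin n) (c : Bool) :
    (Gb n).dist (inl x) (inr (o, i, c)) ≤ lv c + (if x = o then 0 else 1) := by
  have h1 : (Gb n).dist (inl o) (inr (o, i, c)) ≤ lv c := by
    cases c
    · simpa [lv] using adj_dist_le (adj_lr.mpr ⟨rfl, rfl⟩)
    · calc (Gb n).dist (inl o) (inr (o, i, true))
          ≤ (Gb n).dist (inl o) (inr (o, i, false))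
            + (Gb n).dist (inr (o, i, false)) (inr (o, i, true)) := gb_conn.dist_triangle
        _ ≤ 1 + 1 := add_le_add (adj_dist_le (adj_lr.mpr ⟨rfl, rfl⟩))
            (adj_dist_le (adj_rr.mpr ⟨rfl, rfl, Or.inl ⟨rfl, rfl⟩⟩))
        _ = lv true := rfl
  by_cases hx : x = o
  · subst hx; simpa using h1
  · calc (Gb n).dist (inl x) (inr (o, i, c))
        ≤ (Gb n).dist (inl x) (inl o) + (Gb n).dist (inl o) (inr (o, i, c)) :=
          gb_conn.dist_triangle
      _ ≤ 1 + lv c := add_le_add (adj_dist_le (adj_ll.mpr hx)) h1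
      _ = lv c + (if x = o then 0 else 1) := by simp [hx]; omega

lemma dist_upper (a b : Vb n) : (Gb n).dist a b ≤ d n a b := by
  obtain (x | ⟨o, i, c⟩) := a <;> obtain (y | ⟨o', i', c'⟩) := b
  · by_cases h : x = y
    · subst h; simp [d, SimpleGraph.dist_self]
    · simpa [d, h] using adj_dist_le (adj_ll.mpr h)
  · simpa [d] using dist_lr_le x o' i' c'
  · rw [SimpleGraph.dist_comm]
    simpa [d] using dist_lr_le y o i c
  · by_cases ho : o = o'
    · subst ho
      by_cases hi : i = i'
      · subst hi
        by_cases hc : c = c'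
        · subst hc; simp [d, SimpleGraph.dist_self]
        · have : (Gb n).Adj (inr (o, i, c)) (inr (o, i, c')) := by
            refine adj_rr.mpr ⟨rfl, rfl, ?_⟩
            cases c <;> cases c' <;> simp_all
          simpa [d, hc] using adj_dist_le this
      · calc (Gb n).dist (inr (o, i, c)) (inr (o, i', c'))
            ≤ (Gb n).dist (inr (o, i, c)) (inl o)
              + (Gb n).dist (inl o) (inr (o, i', c')) := gb_conn.dist_triangle
          _ ≤ lv c + lv c' := by
              rw [SimpleGraph.dist_comm (G := Gb n) (u := inr (o, i, c))]
              have h1 := dist_lr_le (n := n) o o i c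
              have h2 := dist_lr_le (n := n) o o i' c'
              simp at h1 h2
              omega
          _ = d n (inr (o, i, c)) (inr (o, i', c')) := by simp [d, hi]
    · calc (Gb n).dist (inr (o, i, c)) (inr (o', i', c'))
          ≤ (Gb n).dist (inr (o, i, c)) (inl o)
            + (Gb n).dist (inl o) (inr (o', i', c')) := gb_conn.dist_triangle
        _ ≤ lv c + (lv c' + 1) := by
            rw [SimpleGraph.dist_comm (G := Gb n) (u := inr (o, i, c))]
            have h1 := dist_lr_le (n := n) o o i c
            have h2 := dist_lr_le (n := n) o o' i' c'
            simp [ho] at h1 h2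
            omega
        _ = d n (inr (o, i, c)) (inr (o', i', c')) := by simp [d, ho]; omega

lemma d_step (v : Vb n) {a b : Vb n} (h : (Gb n).Adj a b) : d n v b ≤ d n v a + 1 := by
  obtain (x | ⟨o, i, c⟩) := a <;> obtain (y | ⟨o', i', c'⟩) := b
  · rw [adj_ll] at h
    obtain (z | ⟨p, j, e⟩) := v <;> simp [d, lv] <;> split_ifs <;> simp_all
  · rw [adj_lr] at h
    obtain ⟨rfl, rfl⟩ := h
    obtain (z | ⟨p, j, e⟩) := v <;> simp [d, lv] <;> split_ifs <;> simp_all <;> omega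
  · rw [SimpleGraph.adj_comm, adj_lr] at h
    obtain ⟨rfl, rfl⟩ := h
    obtain (z | ⟨p, j, e⟩) := v <;> simp [d, lv] <;> split_ifs <;> simp_all <;> omega
  · rw [adj_rr] at h
    obtain ⟨rfl, rfl, h⟩ := h
    obtain (z | ⟨p, j, e⟩) := v <;>
      rcases h with ⟨rfl, rfl⟩ | ⟨rfl, rfl⟩ <;>
      simp [d, lv] <;> split_ifs <;> simp_all <;> omega

lemma d_le_length (v : Vb n) {a b : Vb n} (p : (Gb n).Walk a b) :
    d n v b ≤ d n v a + p.length := by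
  induction p with
  | nil => simp
  | @cons a c b h p ih =>
      have := d_step v h
      simp [SimpleGraph.Walk.length_cons]
      omega

lemma dist_eq (a b : Vb n) : (Gb n).dist a b = d n a b := by
  refine le_antisymm (dist_upper a b) ?_
  obtain ⟨p, hp⟩ := (gb_conn.preconnected a b).exists_walk_length_eq_dist
  have := d_le_length a p
  rw [d_self] at this
  omega


lemma sum_fin_ite (i : Fin n) (a b : ℕ) :
    (∑ x : Fin n, if i = x then a else b) = a + (n - 1) * b := by
  classical
  rw [Finset.sum_ite, Finset.sum_const, Finset.sum_const, Finset.filter_eq]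
  simp [Finset.filter_ne, Finset.card_erase_of_mem]

lemma countA (o : Bool) :
    (univ.filter fun w : Vb n => d n (inl o) w = 2).card = 2 * n := by
  cases o <;>
  · rw [Finset.card_filter, Fintype.sum_sum_type]
    simp [d, lv, Sb, Fintype.sum_prod_type, Fintype.sum_bool, Finset.card_univ,
      -Finset.sum_boole, apply_ite (fun t : ℕ => t = 2), apply_ite (fun t : ℕ => t = 3),
      ite_not, sum_fin_ite]
    try omega

lemma countB (o : Bool) :
    (univ.filter fun w : Vb n => d n (inl o) w = 2 ∧ Sb n w = o).card = 0 := by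
  cases o <;>
  · rw [Finset.card_filter, Fintype.sum_sum_type]
    simp [d, lv, Sb, Fintype.sum_prod_type, Fintype.sum_bool, Finset.card_univ,
      -Finset.sum_boole, apply_ite (fun t : ℕ => t = 2), apply_ite (fun t : ℕ => t = 3),
      ite_not, sum_fin_ite]
    try omega

lemma countC (o : Bool) (i : Fin n) :
    (univ.filter fun w : Vb n => d n (inr (o, i, false)) w = 2).card = n := by
  have hn : 1 ≤ n := i.pos
  cases o <;>
  · rw [Finset.card_filter, Fintype.sum_sum_type]
    simp [d, lv, Sb, Fintype.sum_prod_type, Fintype.sum_bool, Finset.card_univ,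
      -Finset.sum_boole, apply_ite (fun t : ℕ => t = 2), apply_ite (fun t : ℕ => t = 3),
      ite_not, sum_fin_ite]
    try omega

lemma countD (o : Bool) (i : Fin n) :
    (univ.filter fun w : Vb n => d n (inr (o, i, false)) w = 2 ∧ Sb n w = o).card = n - 1 := by
  cases o <;>
  · rw [Finset.card_filter, Fintype.sum_sum_type]
    simp [d, lv, Sb, Fintype.sum_prod_type, Fintype.sum_bool, Finset.card_univ,
      -Finset.sum_boole, apply_ite (fun t : ℕ => t = 2), apply_ite (fun t : ℕ => t = 3),
      ite_not, sum_fin_ite]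
    try omega

lemma countE (o : Bool) (i : Fin n) :
    (univ.filter fun w : Vb n => d n (inr (o, i, true)) w = 2).card = 1 := by
  cases o <;>
  · rw [Finset.card_filter, Fintype.sum_sum_type]
    simp [d, lv, Sb, Fintype.sum_prod_type, Fintype.sum_bool, Finset.card_univ,
      -Finset.sum_boole, apply_ite (fun t : ℕ => t = 2), apply_ite (fun t : ℕ => t = 3),
      ite_not, sum_fin_ite]
    try omega

lemma countF (o : Bool) (i : Fin n) :
    (univ.filter fun w : Vb n => d n (inr (o, i, true)) w = 2 ∧ Sb n w = !o).card = 0 := by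
  cases o <;>
  · rw [Finset.card_filter, Fintype.sum_sum_type]
    simp [d, lv, Sb, Fintype.sum_prod_type, Fintype.sum_bool, Finset.card_univ,
      -Finset.sum_boole, apply_ite (fun t : ℕ => t = 2), apply_ite (fun t : ℕ => t = 3),
      ite_not, sum_fin_ite]
    try omega

lemma countG (o : Bool) :
    (univ.filter fun w : Vb n => d n (inl o) w = 3).card = n := by
  cases o <;>
  · rw [Finset.card_filter, Fintype.sum_sum_type]
    simp [d, lv, Sb, Fintype.sum_prod_type, Fintype.sum_bool, Finset.card_univ,
      -Finset.sum_boole, apply_ite (fun t : ℕ => t = 2), apply_ite (fun t : ℕ => t = 3),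
      ite_not, sum_fin_ite]
    try omega

lemma countH (o : Bool) :
    (univ.filter fun w : Vb n => d n (inl o) w = 3 ∧ Sb n w = o).card = n := by
  cases o <;>
  · rw [Finset.card_filter, Fintype.sum_sum_type]
    simp [d, lv, Sb, Fintype.sum_prod_type, Fintype.sum_bool, Finset.card_univ,
      -Finset.sum_boole, apply_ite (fun t : ℕ => t = 2), apply_ite (fun t : ℕ => t = 3),
      ite_not, sum_fin_ite]
    try omega

lemma countI (o : Bool) (i : Fin n) :
    (univ.filter fun w : Vb n => d n (inr (o, i, false)) w = 3).card = 2 * n - 1 := by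
  have hn : 1 ≤ n := i.pos
  cases o <;>
  · rw [Finset.card_filter, Fintype.sum_sum_type]
    simp [d, lv, Sb, Fintype.sum_prod_type, Fintype.sum_bool, Finset.card_univ,
      -Finset.sum_boole, apply_ite (fun t : ℕ => t = 2), apply_ite (fun t : ℕ => t = 3),
      ite_not, sum_fin_ite]
    try omega

lemma countJ (o : Bool) (i : Fin n) :
    (univ.filter fun w : Vb n => d n (inr (o, i, false)) w = 3 ∧ Sb n w = o).card = 0 := by
  cases o <;>
  · rw [Finset.card_filter, Fintype.sum_sum_type]
    simp [d, lv, Sb, Fintype.sum_prod_type, Fintype.sum_bool, Finset.card_univ,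
      -Finset.sum_boole, apply_ite (fun t : ℕ => t = 2), apply_ite (fun t : ℕ => t = 3),
      ite_not, sum_fin_ite]
    try omega

lemma countK (o : Bool) (i : Fin n) :
    (univ.filter fun w : Vb n => d n (inr (o, i, true)) w = 3).card = n := by
  have hn : 1 ≤ n := i.pos
  cases o <;>
  · rw [Finset.card_filter, Fintype.sum_sum_type]
    simp [d, lv, Sb, Fintype.sum_prod_type, Fintype.sum_bool, Finset.card_univ,
      -Finset.sum_boole, apply_ite (fun t : ℕ => t = 2), apply_ite (fun t : ℕ => t = 3),
      ite_not, sum_fin_ite]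
    try omega

lemma countL (o : Bool) (i : Fin n) :
    (univ.filter fun w : Vb n => d n (inr (o, i, true)) w = 3 ∧ Sb n w = !o).card = 1 := by
  cases o <;>
  · rw [Finset.card_filter, Fintype.sum_sum_type]
    simp [d, lv, Sb, Fintype.sum_prod_type, Fintype.sum_bool, Finset.card_univ,
      -Finset.sum_boole, apply_ite (fun t : ℕ => t = 2), apply_ite (fun t : ℕ => t = 3),
      ite_not, sum_fin_ite]
    try omega

lemma countS (o : Bool) :
    (univ.filter fun w : Vb n => Sb n w = o).card = 2 * n + 1 := by
  cases o <;>
  · rw [Finset.card_filter, Fintype.sum_sum_type]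
    simp [d, lv, Sb, Fintype.sum_prod_type, Fintype.sum_bool, Finset.card_univ,
      -Finset.sum_boole, apply_ite (fun t : ℕ => t = 2), apply_ite (fun t : ℕ => t = 3),
      ite_not, sum_fin_ite]
    try omega



lemma Sb_inl (x : Bool) : Sb n (Sum.inl x) = x := rfl
lemma Sb_leaf (o : Bool) (i : Fin n) : Sb n (Sum.inr (o, i, false)) = o := rfl
lemma Sb_pend (o : Bool) (i : Fin n) : Sb n (Sum.inr (o, i, true)) = !o := rfl

lemma Nk_eq (k : ℕ) (v : Vb n) :
    Nk (Gb n) k v = univ.filter (fun w => d n v w = k) := by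
  simp only [Nk, dist_eq]

lemma Nk2_ne (hn : 1 ≤ n) (v : Vb n) : (Nk (Gb n) 2 v).Nonempty := by
  rw [← Finset.card_pos, Nk_eq]
  obtain (x | ⟨o, i, c⟩) := v
  · rw [countA]; omega
  · cases c
    · rw [countC]; omega
    · rw [countE]; omega

lemma Nk3_ne (hn : 1 ≤ n) (v : Vb n) : (Nk (Gb n) 3 v).Nonempty := by
  rw [← Finset.card_pos, Nk_eq]
  obtain (x | ⟨o, i, c⟩) := v
  · rw [countG]; omega
  · cases c
    · rw [countI]; omega
    · rw [countK]; omega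

lemma Vk_eq {k : ℕ} (h : ∀ v : Vb n, (Nk (Gb n) k v).Nonempty) (s : Bool) :
    Vk (Gb n) (Sb n) k s = univ.filter (fun v => Sb n v = s) := by
  unfold Vk
  apply Finset.filter_congr
  intro v _
  simp [h v]

lemma phi2 (hn : 1 ≤ n) (s : Bool) :
    phi (Gb n) (Sb n) 2 s s = ((n : ℝ) - 1) / (2 * (n : ℝ) + 1) := by
  have hne := Nk2_ne (n := n) hn
  have hn0 : (n : ℝ) ≠ 0 := by exact Nat.cast_ne_zero.mpr (by omega)
  rw [phi, Vk_eq hne s, countS s, Finset.sum_filter]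
  have hsum : (∑ v : Vb n, (if Sb n v = s then
      (((Nk (Gb n) 2 v).filter (fun w => Sb n w = s)).card : ℝ) / ((Nk (Gb n) 2 v).card : ℝ)
      else 0)) = (n : ℝ) - 1 := by
    simp only [Nk_eq, Finset.filter_filter]
    cases s
    · have hF := fun i : Fin n => countF (n := n) true i
      simp only [Bool.not_true] at hF
      rw [Fintype.sum_sum_type]
      simp [Sb_inl, Sb_leaf, Sb_pend, Fintype.sum_prod_type, Fintype.sum_bool, countA, countB, countC, countD,
        countE, hF, Finset.sum_const, Finset.card_univ]
      rw [Nat.cast_sub hn]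
      field_simp
      try norm_num
    · have hF := fun i : Fin n => countF (n := n) false i
      simp only [Bool.not_false] at hF
      rw [Fintype.sum_sum_type]
      simp [Sb_inl, Sb_leaf, Sb_pend, Fintype.sum_prod_type, Fintype.sum_bool, countA, countB, countC, countD,
        countE, hF, Finset.sum_const, Finset.card_univ]
      rw [Nat.cast_sub hn]
      field_simp
      try norm_num
  rw [hsum]
  push_cast
  ring_nf

lemma phi3 (hn : 1 ≤ n) (s : Bool) :
    phi (Gb n) (Sb n) 3 s s = 2 / (2 * (n : ℝ) + 1) := by
  have hne := Nk3_ne (n := n) hn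
  have hn0 : (n : ℝ) ≠ 0 := by exact Nat.cast_ne_zero.mpr (by omega)
  rw [phi, Vk_eq hne s, countS s, Finset.sum_filter]
  have hsum : (∑ v : Vb n, (if Sb n v = s then
      (((Nk (Gb n) 3 v).filter (fun w => Sb n w = s)).card : ℝ) / ((Nk (Gb n) 3 v).card : ℝ)
      else 0)) = 2 := by
    simp only [Nk_eq, Finset.filter_filter]
    cases s
    · have hL := fun i : Fin n => countL (n := n) true i
      simp only [Bool.not_true] at hL
      rw [Fintype.sum_sum_type]
      simp [Sb_inl, Sb_leaf, Sb_pend, Fintype.sum_prod_type, Fintype.sum_bool, countG, countH, countI, countJ,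
        countK, hL, Finset.sum_const, Finset.card_univ]
      field_simp
      try norm_num
    · have hL := fun i : Fin n => countL (n := n) false i
      simp only [Bool.not_false] at hL
      rw [Fintype.sum_sum_type]
      simp [Sb_inl, Sb_leaf, Sb_pend, Fintype.sum_prod_type, Fintype.sum_bool, countG, countH, countI, countJ,
        countK, hL, Finset.sum_const, Finset.card_univ]
      field_simp
      try norm_num
  rw [hsum]
  push_cast
  ring_nf

lemma NB2 (hn : 2 ≤ n) : NB (Gb n) (Sb n) 2 = 3 / (2 * (n : ℝ) + 1) := by
  have hn1 : 1 ≤ n := by omega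
  have h1 : (0:ℝ) < 2 * (n : ℝ) + 1 := by positivity
  rw [NB, phi2 hn1, phi2 hn1]
  have : ((n : ℝ) - 1) / (2 * (n : ℝ) + 1) + ((n : ℝ) - 1) / (2 * (n : ℝ) + 1) - 1
      = -(3 / (2 * (n : ℝ) + 1)) := by
    field_simp
    ring
  rw [this, abs_neg, abs_of_nonneg (by positivity)]

lemma NB3 (hn : 2 ≤ n) : NB (Gb n) (Sb n) 3 = (2 * (n : ℝ) - 3) / (2 * (n : ℝ) + 1) := by
  have hn1 : 1 ≤ n := by omega
  have h1 : (0:ℝ) < 2 * (n : ℝ) + 1 := by positivity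
  have h2 : (2:ℝ) ≤ (n : ℝ) := by exact_mod_cast hn
  rw [NB, phi3 hn1, phi3 hn1]
  have : 2 / (2 * (n : ℝ) + 1) + 2 / (2 * (n : ℝ) + 1) - 1
      = -((2 * (n : ℝ) - 3) / (2 * (n : ℝ) + 1)) := by
    field_simp
    ring
  rw [this, abs_neg, abs_of_nonneg (div_nonneg (by linarith) (by linarith))]

lemma tendsto_NB3 :
    Filter.Tendsto (fun n : ℕ => NB (Gb n) (Sb n) 3) Filter.atTop (nhds 1) := by
  have hg : Filter.Tendsto (fun n : ℕ => 2 * (n : ℝ) + 1) Filter.atTop Filter.atTop := by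
    apply Filter.tendsto_atTop_add_const_right
    exact (tendsto_natCast_atTop_atTop (R := ℝ)).const_mul_atTop (by norm_num)
  have h0 : Filter.Tendsto (fun n : ℕ => 4 / (2 * (n : ℝ) + 1)) Filter.atTop (nhds 0) :=
    Filter.Tendsto.div_atTop tendsto_const_nhds hg
  have hmain : Filter.Tendsto (fun n : ℕ => 1 - 4 / (2 * (n : ℝ) + 1)) Filter.atTop (nhds 1) := by
    simpa using (tendsto_const_nhds (x := (1:ℝ)) (f := Filter.atTop)).sub h0
  apply hmain.congr'
  filter_upwards [Filter.eventually_ge_atTop 2] with n hn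
  rw [NB3 hn]
  have h1 : (2 * (n : ℝ) + 1) ≠ 0 := by positivity
  field_simp
  ring

end Toy

/-- for toy graph (b), the 2-hop structural bias equals
`NB^(2) = 3/(2n+1)` and the 3-hop structural bias equals `NB^(3) = (2n−3)/(2n+1)`;
in particular `NB^(3) → 1` as `n → ∞`. -/
theorem stmt8 :
    (∀ n : ℕ, 2 ≤ n →
      NB (Gb n) (Sb n) 2 = 3 / (2 * (n : ℝ) + 1) ∧
      NB (Gb n) (Sb n) 3 = (2 * (n : ℝ) - 3) / (2 * (n : ℝ) + 1)) ∧
    Filter.Tendsto (fun n : ℕ => NB (Gb n) (Sb n) 3) Filter.atTop (nhds 1) := by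
  constructor
  · intro n hn
    exact ⟨Toy.NB2 hn, Toy.NB3 hn⟩
  · exact Toy.tendsto_NB3
end

section
/- For the sensitive star graph, the within-group exposure of the blue group at 1 hop equals φ^(1)_{0→0} = p(n+1)/(np+1), and the within-group exposure of the red group equals φ^(1)_{1→1} = 0. -/
open Finset
open scoped Classical

lemma star_adj_iff (n : ℕ) (x y : Vstar n) :
    (Gstar n).Adj x y ↔ x ≠ y ∧ (x = none ∨ y = none) := by
  simp [Gstar, SimpleGraph.fromRel_adj]

lemma Nk_none (n : ℕ) : Nk (Gstar n) 1 none = Finset.univ.erase none := by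
  ext w
  simp only [Nk, mem_filter, mem_univ, true_and, SimpleGraph.dist_eq_one_iff_adj,
    star_adj_iff, mem_erase]
  cases w <;> simp

lemma Nk_some (n : ℕ) (i : Fin n) : Nk (Gstar n) 1 (some i) = {none} := by
  ext w
  simp only [Nk, mem_filter, mem_univ, true_and, SimpleGraph.dist_eq_one_iff_adj,
    star_adj_iff, mem_singleton]
  cases w <;> simp

lemma card_Nk_none (n : ℕ) : (Nk (Gstar n) 1 none).card = n := by
  rw [Nk_none, card_erase_of_mem (mem_univ _)]
  simp

lemma card_filter_lt (n m : ℕ) (hmn : m < n) :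
    (Finset.univ.filter (fun i : Fin n => i.val < m)).card = m := by
  have h : (Finset.univ.filter (fun i : Fin n => i.val < m))
      = Finset.Iio (⟨m, hmn⟩ : Fin n) := by
    ext i; simp [Fin.lt_def]
  rw [h, Fin.card_Iio]

lemma Vk_false (n m : ℕ) (hm : 0 < m) (hmn : m < n) :
    Vk (Gstar n) (Sstar n m) 1 false =
      insert none ((Finset.univ.filter (fun i : Fin n => i.val < m)).image some) := by
  have hn : 0 < n := hm.trans hmn
  have hne : (Nk (Gstar n) 1 (none : Vstar n)).Nonempty := by
    rw [← card_pos, card_Nk_none]; exact hn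
  ext v
  simp only [Vk, mem_filter, mem_univ, true_and, mem_insert, mem_image]
  cases v with
  | none => simp [Sstar, hne]
  | some i =>
    simp only [Sstar, Nk_some, decide_eq_false_iff_not, Finset.singleton_nonempty, and_true,
      Option.some.injEq, reduceCtorEq, false_or]
    constructor
    · intro h; exact ⟨i, by omega, rfl⟩
    · rintro ⟨a, ha, rfl⟩; omega

lemma Vk_true (n m : ℕ) :
    Vk (Gstar n) (Sstar n m) 1 true =
      (Finset.univ.filter (fun i : Fin n => m ≤ i.val)).image some := by
  ext v
  simp only [Vk, mem_filter, mem_univ, true_and, mem_image]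
  cases v with
  | none => simp [Sstar]
  | some i =>
    simp only [Sstar, Nk_some, decide_eq_true_eq, Finset.singleton_nonempty, and_true,
      Option.some.injEq]
    constructor
    · intro h; exact ⟨i, h, rfl⟩
    · rintro ⟨a, ha, rfl⟩; exact ha

lemma Nk_none_filter_false (n m : ℕ) (hmn : m < n) :
    ((Nk (Gstar n) 1 (none : Vstar n)).filter (fun w => Sstar n m w = false)).card = m := by
  have h : (Nk (Gstar n) 1 (none : Vstar n)).filter (fun w => Sstar n m w = false)
      = (Finset.univ.filter (fun i : Fin n => i.val < m)).image some := by
    rw [Nk_none]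
    ext w
    cases w with
    | none => simp
    | some i =>
      rw [mem_filter]
      simp only [mem_filter, mem_erase, mem_univ, and_true, true_and, Sstar, mem_image,
        decide_eq_false_iff_not, Option.some.injEq, ne_eq, reduceCtorEq, not_false_eq_true]
      constructor
      · intro h; exact ⟨i, by omega, rfl⟩
      · rintro ⟨a, ha, rfl⟩; omega
  rw [h, Finset.card_image_of_injective _ (Option.some_injective _), card_filter_lt n m hmn]

/-- for the sensitive star graph (blue center, `n` peripheral nodes of
which `m = np` are blue, `p = m/n`), the 1-hop within-group exposures are
`φ^(1)_{0→0} = p(n+1)/(np+1)` for the blue group and `φ^(1)_{1→1} = 0` for the red group. -/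
theorem stmt16 (n m : ℕ) (hm : 0 < m) (hmn : m < n) :
    phi (Gstar n) (Sstar n m) 1 false false =
      ((m : ℝ) / n) * ((n : ℝ) + 1) / ((n : ℝ) * ((m : ℝ) / n) + 1) ∧
    phi (Gstar n) (Sstar n m) 1 true true = 0 := by
  have hn : 0 < n := hm.trans hmn
  have hinj := Option.some_injective (Fin n)
  constructor
  · rw [phi, Vk_false n m hm hmn]
    have hnotmem : (none : Vstar n) ∉
        (Finset.univ.filter (fun i : Fin n => i.val < m)).image some := by
      simp
    rw [Finset.sum_insert hnotmem, Finset.sum_image (fun a _ b _ h => hinj h),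
      Finset.card_insert_of_notMem hnotmem,
      Finset.card_image_of_injective _ hinj, card_filter_lt n m hmn]
    have hterm : ∀ i ∈ Finset.univ.filter (fun i : Fin n => i.val < m),
        (((Nk (Gstar n) 1 (some i)).filter (fun w => Sstar n m w = false)).card : ℝ) /
          ((Nk (Gstar n) 1 (some i)).card : ℝ) = 1 := by
      intro i _
      rw [Nk_some]
      have : ({(none : Vstar n)} : Finset (Vstar n)).filter (fun w => Sstar n m w = false)
          = {none} := by
        simp [Finset.filter_singleton, show Sstar n m (none : Vstar n) = false from rfl]
      rw [this]; norm_num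
    rw [Finset.sum_congr rfl hterm, Nk_none_filter_false n m hmn, card_Nk_none]
    have hn' : (n : ℝ) ≠ 0 := Nat.cast_ne_zero.mpr hn.ne'
    have hm1 : (m : ℝ) + 1 ≠ 0 := by positivity
    push_cast
    field_simp
    rw [Finset.sum_const, nsmul_eq_mul, mul_one, card_filter_lt n m hmn]
    ring
  · rw [phi, Vk_true n m, Finset.sum_image (fun a _ b _ h => hinj h)]
    have hterm : ∀ i ∈ Finset.univ.filter (fun i : Fin n => m ≤ i.val),
        (((Nk (Gstar n) 1 (some i)).filter (fun w => Sstar n m w = true)).card : ℝ) /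
          ((Nk (Gstar n) 1 (some i)).card : ℝ) = 0 := by
      intro i _
      rw [Nk_some]
      have : ({(none : Vstar n)} : Finset (Vstar n)).filter (fun w => Sstar n m w = true)
          = ∅ := by
        simp [Finset.filter_singleton, show Sstar n m (none : Vstar n) = false from rfl]
      rw [this]; simp
    rw [Finset.sum_congr rfl hterm]
    simp
end

section
/- In toy graph (a), every node at distance exactly 3 from a peripheral node has: among its 3-hop neighbors, exactly n blue and n red nodes; consequently φ^(3)_{0→0} = φ^(3)_{1→1} = 1/2 and NB^(3) = 0, i.e., the graph is exactly unbiased at hop 3 for every n ≥ 1. -/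
open Finset
open scoped Classical

/-- Vertices of toy graph (a): `Sum.inl x` is the bridge node of color `x`
(`false` = blue, `true` = red); `Sum.inr (o, c, i)` is the `i`-th pendant leaf of
color `c` attached to the bridge node of color `o`. -/
abbrev Va (n : ℕ) := Bool ⊕ (Bool × Bool × Fin n)

def relA (n : ℕ) : Va n → Va n → Prop
  | Sum.inl _, Sum.inl _ => True
  | Sum.inl x, Sum.inr p => x = p.1
  | _, _ => False

/-- Toy graph (a): the two bridge nodes are adjacent, and each bridge node carries
`n` blue and `n` red pendant leaves. -/
def Ga (n : ℕ) : SimpleGraph (Va n) := SimpleGraph.fromRel (relA n)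

/-- Colors in toy graph (a). -/
def Sa (n : ℕ) : Va n → Bool
  | Sum.inl x => x
  | Sum.inr p => p.2.1


variable {n : ℕ}


lemma adj_inl_inl (x y : Bool) : (Ga n).Adj (Sum.inl x) (Sum.inl y) ↔ x ≠ y := by
  simp [Ga, SimpleGraph.fromRel_adj, relA]

lemma adj_inl_inr (x : Bool) (p : Bool × Bool × Fin n) :
    (Ga n).Adj (Sum.inl x) (Sum.inr p) ↔ x = p.1 := by
  simp [Ga, SimpleGraph.fromRel_adj, relA]

lemma adj_inr (p : Bool × Bool × Fin n) (m : Va n) :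
    (Ga n).Adj (Sum.inr p) m ↔ m = Sum.inl p.1 := by
  cases m with
  | inl x =>
    simp [Ga, SimpleGraph.fromRel_adj, relA, eq_comm]
  | inr q =>
    simp [Ga, SimpleGraph.fromRel_adj, relA]


lemma dist_inl_le (x : Bool) (w : Va n) : (Ga n).dist (Sum.inl x) w ≤ 2 := by
  cases w with
  | inl y =>
    by_cases h : x = y
    · subst h; simp [SimpleGraph.dist_self]
    · have := SimpleGraph.dist_le
        (SimpleGraph.Walk.cons ((adj_inl_inl (n := n) x y).2 h) .nil)
      simp only [SimpleGraph.Walk.length_cons, SimpleGraph.Walk.length_nil] at this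
      omega
  | inr q =>
    by_cases h : x = q.1
    · have := SimpleGraph.dist_le
        (SimpleGraph.Walk.cons ((adj_inl_inr (n := n) x q).2 h) .nil)
      simp only [SimpleGraph.Walk.length_cons, SimpleGraph.Walk.length_nil] at this
      omega
    · have := SimpleGraph.dist_le (SimpleGraph.Walk.cons ((adj_inl_inl (n := n) x q.1).2 h)
        (.cons ((adj_inl_inr q.1 q).2 rfl) .nil))
      simp only [SimpleGraph.Walk.length_cons, SimpleGraph.Walk.length_nil] at this
      omega

lemma walk_long {p q : Bool × Bool × Fin n} (hpq : q.1 ≠ p.1)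
    (w : (Ga n).Walk (Sum.inr p) (Sum.inr q)) : 3 ≤ w.length := by
  cases w with
  | nil => exact absurd rfl hpq
  | cons h rest =>
    rename_i m
    have hm : m = Sum.inl p.1 := (adj_inr p m).1 h
    subst hm
    cases rest with
    | cons h2 rest2 =>
      rename_i m2
      cases rest2 with
      | nil =>
        exact absurd ((adj_inl_inr p.1 q).1 h2) (fun h => hpq h.symm)
      | cons h3 rest3 =>
        simp only [SimpleGraph.Walk.length_cons]
        omega

lemma dist_inr_inr (p q : Bool × Bool × Fin n) (hpq : q.1 ≠ p.1) :
    (Ga n).dist (Sum.inr p) (Sum.inr q) = 3 := by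
  have hle := SimpleGraph.dist_le
    (SimpleGraph.Walk.cons ((adj_inr (n := n) p _).2 rfl)
      (.cons ((adj_inl_inl p.1 q.1).2 (fun h => hpq h.symm))
        (.cons ((adj_inl_inr q.1 q).2 rfl) .nil)))
  simp only [SimpleGraph.Walk.length_cons, SimpleGraph.Walk.length_nil] at hle
  have hr : (Ga n).Reachable (Sum.inr p) (Sum.inr q) :=
    ⟨SimpleGraph.Walk.cons ((adj_inr (n := n) p _).2 rfl)
      (.cons ((adj_inl_inl p.1 q.1).2 (fun h => hpq h.symm))
        (.cons ((adj_inl_inr q.1 q).2 rfl) .nil))⟩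
  obtain ⟨w, hwl⟩ := hr.exists_walk_length_eq_dist
  have := walk_long hpq w
  omega

lemma dist_inr_le (p q : Bool × Bool × Fin n) (hpq : q.1 = p.1) :
    (Ga n).dist (Sum.inr p) (Sum.inr q) ≤ 2 := by
  have := SimpleGraph.dist_le
    (SimpleGraph.Walk.cons ((adj_inr (n := n) p _).2 rfl)
      (.cons ((adj_inl_inr p.1 q).2 hpq.symm) .nil))
  simp only [SimpleGraph.Walk.length_cons, SimpleGraph.Walk.length_nil] at this
  omega

lemma dist_inr_inl_le (p : Bool × Bool × Fin n) (y : Bool) :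
    (Ga n).dist (Sum.inr p) (Sum.inl y) ≤ 2 := by
  by_cases h : y = p.1
  · subst h
    have := SimpleGraph.dist_le (SimpleGraph.Walk.cons ((adj_inr (n := n) p _).2 rfl) .nil)
    simp only [SimpleGraph.Walk.length_cons, SimpleGraph.Walk.length_nil] at this
    omega
  · have := SimpleGraph.dist_le
      (SimpleGraph.Walk.cons ((adj_inr (n := n) p _).2 rfl)
        (.cons ((adj_inl_inl p.1 y).2 (fun hh => h hh.symm)) .nil))
    simp only [SimpleGraph.Walk.length_cons, SimpleGraph.Walk.length_nil] at this
    omega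

lemma dist3_iff (p : Bool × Bool × Fin n) (w : Va n) :
    (Ga n).dist (Sum.inr p) w = 3 ↔ ∃ q : Bool × Bool × Fin n, w = Sum.inr q ∧ q.1 ≠ p.1 := by
  constructor
  · intro hd
    cases w with
    | inl y => have := dist_inr_inl_le p y; omega
    | inr q =>
      refine ⟨q, rfl, ?_⟩
      intro h
      have := dist_inr_le p q h
      omega
  · rintro ⟨q, rfl, hq⟩
    exact dist_inr_inr p q hq

lemma Nk_inl (x : Bool) : Nk (Ga n) 3 (Sum.inl x) = ∅ := by
  ext w
  simp only [Nk, mem_filter, mem_univ, true_and, Finset.notMem_empty, iff_false]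
  have := dist_inl_le x w
  omega

lemma Nk_filter (p : Bool × Bool × Fin n) (c : Bool) :
    (Nk (Ga n) 3 (Sum.inr p)).filter (fun w => Sa n w = c) =
      (univ : Finset (Fin n)).image (fun i => (Sum.inr (!p.1, c, i) : Va n)) := by
  ext w
  simp only [Nk, mem_filter, mem_univ, true_and, mem_image, dist3_iff]
  constructor
  · rintro ⟨⟨q, rfl, hq⟩, hc⟩
    obtain ⟨a, b, i⟩ := q
    simp only [Sa] at hc
    refine ⟨i, ?_⟩
    subst hc
    cases a <;> cases hp : p.1 <;> simp_all
  · rintro ⟨i, rfl⟩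
    exact ⟨⟨(!p.1, c, i), rfl, by cases p.1 <;> simp⟩, rfl⟩

lemma Nk_filter_card (p : Bool × Bool × Fin n) (c : Bool) :
    ((Nk (Ga n) 3 (Sum.inr p)).filter (fun w => Sa n w = c)).card = n := by
  rw [Nk_filter, Finset.card_image_of_injective _ (fun i j h => by simpa using h)]
  simp

lemma Nk_card (p : Bool × Bool × Fin n) :
    (Nk (Ga n) 3 (Sum.inr p)).card = 2 * n := by
  have := Finset.card_filter_add_card_filter_not
    (s := Nk (Ga n) 3 (Sum.inr p)) (p := fun w => Sa n w = false)
  have h1 := Nk_filter_card p false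
  have h2 := Nk_filter_card p true
  have hneg : (Nk (Ga n) 3 (Sum.inr p)).filter (fun w => ¬ Sa n w = false) =
      (Nk (Ga n) 3 (Sum.inr p)).filter (fun w => Sa n w = true) := by
    apply filter_congr; intro w _; simp
  rw [hneg, h1, h2] at this
  omega

lemma Vk_eq (s : Bool) (hn : 1 ≤ n) :
    Vk (Ga n) (Sa n) 3 s =
      (univ : Finset (Bool × Fin n)).image (fun oi => (Sum.inr (oi.1, s, oi.2) : Va n)) := by
  ext v
  simp only [Vk, mem_filter, mem_univ, true_and, mem_image]
  constructor
  · rintro ⟨hs, hne⟩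
    cases v with
    | inl x => rw [Nk_inl] at hne; exact absurd hne (by simp)
    | inr q =>
      obtain ⟨a, b, i⟩ := q
      simp only [Sa] at hs
      exact ⟨(a, i), by simp [hs]⟩
  · rintro ⟨⟨o, i⟩, rfl⟩
    refine ⟨rfl, ?_⟩
    rw [← Finset.card_pos, Nk_card]
    omega

lemma Vk_card (s : Bool) (hn : 1 ≤ n) : (Vk (Ga n) (Sa n) 3 s).card = 2 * n := by
  rw [Vk_eq s hn, Finset.card_image_of_injective _ (fun a b h => by
    obtain ⟨a1, a2⟩ := a; obtain ⟨b1, b2⟩ := b; simpa using h)]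
  simp [Finset.card_univ, mul_comm]

lemma phi_half (s : Bool) (hn : 1 ≤ n) : phi (Ga n) (Sa n) 3 s s = 1 / 2 := by
  have hn0 : (n : ℝ) ≠ 0 := Nat.cast_ne_zero.mpr (by omega)
  have hsum : ∑ v ∈ Vk (Ga n) (Sa n) 3 s,
      (((Nk (Ga n) 3 v).filter (fun w => Sa n w = s)).card : ℝ) / ((Nk (Ga n) 3 v).card : ℝ)
      = ((Vk (Ga n) (Sa n) 3 s).card : ℝ) * (1 / 2) := by
    rw [Finset.sum_congr rfl (fun v hv => ?_), Finset.sum_const, nsmul_eq_mul]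
    rw [Vk_eq s hn] at hv
    obtain ⟨⟨o, i⟩, -, rfl⟩ := Finset.mem_image.mp hv
    rw [Nk_filter_card, Nk_card]
    push_cast
    field_simp
  unfold phi
  rw [hsum, Vk_card s hn]
  push_cast
  field_simp

/-- in toy graph (a), every peripheral (pendant) node has exactly `n`
blue and `n` red nodes among its 3-hop neighbors; consequently
`φ^(3)_{0→0} = φ^(3)_{1→1} = 1/2` and `NB^(3) = 0` for every `n ≥ 1`. -/
theorem stmt17 (n : ℕ) (hn : 1 ≤ n) :
    (∀ p : Bool × Bool × Fin n,
      ((Nk (Ga n) 3 (Sum.inr p)).filter (fun w => Sa n w = false)).card = n ∧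
      ((Nk (Ga n) 3 (Sum.inr p)).filter (fun w => Sa n w = true)).card = n) ∧
    phi (Ga n) (Sa n) 3 false false = 1 / 2 ∧
    phi (Ga n) (Sa n) 3 true true = 1 / 2 ∧
    NB (Ga n) (Sa n) 3 = 0 := by
  have hpart : (∀ p : Bool × Bool × Fin n,
      ((Nk (Ga n) 3 (Sum.inr p)).filter (fun w => Sa n w = false)).card = n ∧
      ((Nk (Ga n) 3 (Sum.inr p)).filter (fun w => Sa n w = true)).card = n) :=
    fun p => ⟨Nk_filter_card p false, Nk_filter_card p true⟩
  have h0 := phi_half (n := n) false hn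
  have h1 := phi_half (n := n) true hn
  refine ⟨hpart, h0, h1, ?_⟩
  unfold NB
  rw [h0, h1]
  norm_num
end
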